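/- Let θ < κ be infinite regular cardinals and let e : [κ]² → θ be a subadditive coloring such that for every S ⊆ κ with |S| = κ, the set {e(α,β) : α < β, α,β ∈ S} is cofinal in θ. Then for every A ⊆ κ with |A| = κ, the set of γ < κ for which {e(α,γ) : α ∈ A ∩ γ} is cofinal in θ contains a club in κ. -/

import Mathlib

open Cardinal Set

/-- `D` is a club in (the set of ordinals below) `o`: `D ⊆ o`, `D` is unbounded in `o`,
and `D` contains the supremum of each of its nonempty subsets that is bounded below `o`. -/
def IsClubIn (D : Set Ordinal) (o : Ordinal) : Prop :=
  D ⊆ Set.Iio o ∧ (∀ a < o, ∃ b ∈ D, a ≤ b) ∧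
    (∀ S : Set Ordinal, S ⊆ D → S.Nonempty → sSup S < o → sSup S ∈ D)

/-- A coloring of pairs of ordinals below `κ` is subadditive. -/
def SubadditiveOn (e : Ordinal → Ordinal → Ordinal) (κ : Ordinal) : Prop :=
  ∀ α β γ : Ordinal, α < β → β < γ → γ < κ →
    e α γ ≤ max (e α β) (e β γ) ∧ e α β ≤ max (e α γ) (e β γ)

/-- Let `θ < κ` be infinite regular cardinals and let `e : [κ]² → θ` be a subadditive
coloring such that for every `S ⊆ κ` of full size the set `e“[S]²` is cofinal in `θ`.
Then for every `A ⊆ κ` of full size, the set of `γ < κ` for which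
`{e(α,γ) : α ∈ A ∩ γ}` is cofinal in `θ` contains a club in `κ`. -/
theorem cofinal_colors_on_club (θ κ : Cardinal.{0}) (hθ : θ.IsRegular) (hκ : κ.IsRegular)
    (hθκ : θ < κ) (e : Ordinal → Ordinal → Ordinal)
    (heran : ∀ α β : Ordinal, α < β → β < κ.ord → e α β < θ.ord)
    (hsub : SubadditiveOn e κ.ord)
    (hU : ∀ S : Set Ordinal, S ⊆ Set.Iio κ.ord → #S = Cardinal.lift.{1} κ →
      ∀ i < θ.ord, ∃ α ∈ S, ∃ β ∈ S, α < β ∧ i ≤ e α β)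
    (A : Set Ordinal) (hA : A ⊆ Set.Iio κ.ord) (hAcard : #A = Cardinal.lift.{1} κ) :
    ∃ D : Set Ordinal, IsClubIn D κ.ord ∧
      ∀ γ ∈ D, ∀ i < θ.ord, ∃ α ∈ A, α < γ ∧ i ≤ e α γ := by
  classical
  -- The "bad" sets: `C i` is the set of `δ < κ.ord` whose colors from `A ∩ δ` are below `i`.
  set C : Ordinal → Set Ordinal := fun i => {δ | δ < κ.ord ∧ ∀ α ∈ A, α < δ → e α δ < i}
    with hCdef
  have hκlim : Order.IsSuccLimit κ.ord := Cardinal.isSuccLimit_ord hκ.aleph0_le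
  by_cases hbd : ∃ ε, ε < κ.ord ∧ ∀ i < θ.ord, ∀ γ ∈ C i, γ ≤ ε
  · obtain ⟨ε, hε, hbd⟩ := hbd
    refine ⟨{γ | ε < γ ∧ γ < κ.ord}, ⟨fun γ hγ => hγ.2, ?_, ?_⟩, ?_⟩
    · intro a ha
      refine ⟨max a (ε + 1), ⟨?_, ?_⟩, le_max_left _ _⟩
      · exact lt_of_lt_of_le (lt_add_one ε) (le_max_right _ _)
      · exact max_lt ha (by rw [Ordinal.add_one_eq_succ]; exact hκlim.succ_lt hε)
    · intro S hS hSne hSsup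
      obtain ⟨x, hx⟩ := hSne
      have hbdd : BddAbove S := ⟨κ.ord, fun y hy => le_of_lt (hS hy).2⟩
      exact ⟨lt_of_lt_of_le (hS hx).1 (le_csSup hbdd hx), hSsup⟩
    · rintro γ ⟨hεγ, hγκ⟩ i hiθ
      have hnot : γ ∉ C i := fun h => absurd (hbd i hiθ γ h) (not_le.mpr hεγ)
      rw [hCdef] at hnot
      simp only [Set.mem_setOf_eq, not_and, not_forall, not_lt] at hnot
      obtain ⟨α, hαA, hαγ, hiel⟩ := hnot hγκ
      exact ⟨α, hαA, hαγ, hiel⟩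
  · exfalso
    push_neg at hbd
    -- Some single `i` gives an unbounded bad set `C i`.
    have hub : ∃ i < θ.ord, ∀ ε < κ.ord, ∃ γ ∈ C i, ε < γ := by
      by_contra h
      push_neg at h
      -- choose bounds for each `C i`
      choose! f hf1 hf2 using h
      set g : θ.ord.ToType → Ordinal :=
        fun x => f ((Ordinal.ToType.mk (o := θ.ord)).symm x : Ordinal) with hg
      have hgκ : ∀ x, g x < κ.ord := by
        intro x
        exact hf1 _ ((Ordinal.ToType.mk (o := θ.ord)).symm x).2
      have hsup : iSup g < κ.ord := by
        refine Cardinal.iSup_lt_ord_lift_of_isRegular hκ ?_ hgκ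
        rw [Cardinal.mk_toType, Cardinal.card_ord, Cardinal.lift_id]
        exact hθκ
      obtain ⟨i, hiθ, γ, hγC, hγ⟩ := hbd (iSup g) hsup
      have : γ ≤ g (Ordinal.ToType.mk (o := θ.ord) ⟨i, hiθ⟩) := by
        rw [hg]
        simpa using hf2 i hiθ γ hγC
      exact absurd (this.trans (le_ciSup (Ordinal.bddAbove_range g) _)) (not_le.mpr hγ)
    obtain ⟨i, hiθ, hub⟩ := hub
    obtain ⟨α, hαA, β, hβA, hαβ, hie⟩ := hU A hA hAcard i hiθ
    obtain ⟨δ, hδC, hβδ⟩ := hub β (hA hβA)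
    have h1 : e α δ < i := hδC.2 α hαA (hαβ.trans hβδ)
    have h2 : e β δ < i := hδC.2 β hβA hβδ
    have h3 := (hsub α β δ hαβ hβδ hδC.1).2
    exact absurd (hie.trans h3) (not_le.mpr (max_lt h1 h2))
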